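/- arXiv:0801.4731 — 3 statements merged into one kernel-verified Lean document; each statement's English description precedes it below -/
import Mathlib

section
/- Verification (suboptimality) inequality: let B : ℝⁿ → ℝ be continuously differentiable and satisfy the Hamilton–Jacobi–Bellman equation H(x, ∇B(x)) = 0 for all x ∈ ℝⁿ. Let T > 0, let u : [0, T] → ℝᵐ be continuous, and let x : [0, T] → ℝⁿ be continuously differentiable with ẋ(t) = f(x(t)) + g(x(t))u(t) for all t ∈ [0, T]. Then B(x(0)) ≤ ∫₀ᵀ [ ε(x(t)) + ⟨u(t), Q(x(t))u(t)⟩ ] dt + B(x(T)). -/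
open Matrix
open scoped RealInnerProductSpace

/-- Matrix–vector product landing in Euclidean space. -/
noncomputable def mulv {n m : ℕ} (A : Matrix (Fin n) (Fin m) ℝ)
    (v : EuclideanSpace ℝ (Fin m)) : EuclideanSpace ℝ (Fin n) :=
  WithLp.toLp 2 (fun i => ∑ j, A i j * v j)

/-- The Hamiltonian `H(x,p) = ε(x) + ⟨p, f(x)⟩ − (1/4)⟨g(x)ᵀp, Q(x)⁻¹ g(x)ᵀp⟩`. -/
noncomputable def Ham {n m : ℕ} (f : EuclideanSpace ℝ (Fin n) → EuclideanSpace ℝ (Fin n))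
    (g : EuclideanSpace ℝ (Fin n) → Matrix (Fin n) (Fin m) ℝ)
    (ε : EuclideanSpace ℝ (Fin n) → ℝ)
    (Q : EuclideanSpace ℝ (Fin n) → Matrix (Fin m) (Fin m) ℝ)
    (x p : EuclideanSpace ℝ (Fin n)) : ℝ :=
  ε x + ⟪p, f x⟫ - (1 / 4 : ℝ) * ⟪mulv (g x)ᵀ p, mulv (Q x)⁻¹ (mulv (g x)ᵀ p)⟫

/-- The optimal feedback value `u*(x,p) = −(1/2) Q(x)⁻¹ g(x)ᵀ p`. -/
noncomputable def ustar {n m : ℕ}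
    (g : EuclideanSpace ℝ (Fin n) → Matrix (Fin n) (Fin m) ℝ)
    (Q : EuclideanSpace ℝ (Fin n) → Matrix (Fin m) (Fin m) ℝ)
    (x p : EuclideanSpace ℝ (Fin n)) : EuclideanSpace ℝ (Fin m) :=
  -((1 / 2 : ℝ) • mulv (Q x)⁻¹ (mulv (g x)ᵀ p))


open scoped Gradient

lemma mulv_eq {n m : ℕ} (A : Matrix (Fin n) (Fin m) ℝ) (v : EuclideanSpace ℝ (Fin m)) :
    mulv A v = A *ᵥ (v : Fin m → ℝ) := rfl

lemma inner_eq_dot {k : ℕ} (a b : EuclideanSpace ℝ (Fin k)) :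
    ⟪a, b⟫ = (a : Fin k → ℝ) ⬝ᵥ b := by
  simp [PiLp.inner_apply, dotProduct, RCLike.inner_apply, mul_comm]

lemma key_nonneg {m : ℕ} (S : Matrix (Fin m) (Fin m) ℝ) (hS : S.PosDef)
    (u v : Fin m → ℝ) :
    0 ≤ u ⬝ᵥ S *ᵥ u + v ⬝ᵥ u + (1/4 : ℝ) * (v ⬝ᵥ S⁻¹ *ᵥ v) := by
  have hinv : S * S⁻¹ = 1 := Matrix.mul_nonsing_inv S hS.det_pos.ne'.isUnit
  have hsymm : Sᵀ = S := hS.isHermitian.eq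
  set c : Fin m → ℝ := (1/2 : ℝ) • (S⁻¹ *ᵥ v) with hc
  set w : Fin m → ℝ := u + c with hw
  have h0 : 0 ≤ w ⬝ᵥ S *ᵥ w := by
    have := hS.posSemidef.re_dotProduct_nonneg w
    simpa using this
  have hSc : S *ᵥ c = (1/2 : ℝ) • v := by
    rw [hc, Matrix.mulVec_smul, Matrix.mulVec_mulVec, hinv, Matrix.one_mulVec]
  have hcross : (S⁻¹ *ᵥ v) ⬝ᵥ (S *ᵥ u) = v ⬝ᵥ u := by
    rw [Matrix.dotProduct_mulVec, ← Matrix.mulVec_transpose, hsymm,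
      Matrix.mulVec_mulVec, hinv, Matrix.one_mulVec]
  have hexp : w ⬝ᵥ S *ᵥ w = u ⬝ᵥ S *ᵥ u + v ⬝ᵥ u + (1/4 : ℝ) * (v ⬝ᵥ S⁻¹ *ᵥ v) := by
    rw [hw, Matrix.mulVec_add, hSc, add_dotProduct, dotProduct_add,
      dotProduct_add, hc]
    rw [smul_dotProduct, dotProduct_smul, smul_dotProduct,
      dotProduct_smul, hcross]
    rw [dotProduct_comm u v, dotProduct_comm (S⁻¹ *ᵥ v) v]
    simp [smul_eq_mul]
    ring
  linarith [hexp ▸ h0]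

lemma continuous_mulv {k l : ℕ} :
    Continuous fun q : Matrix (Fin k) (Fin l) ℝ × EuclideanSpace ℝ (Fin l) =>
      mulv q.1 q.2 := by
  have h1 : Continuous fun q : Matrix (Fin k) (Fin l) ℝ × EuclideanSpace ℝ (Fin l) =>
      ((fun i => ∑ j, q.1 i j * q.2 j) : Fin k → ℝ) := by
    apply continuous_pi; intro i
    exact continuous_finset_sum _ fun j _ =>
      ((continuous_apply j).comp ((continuous_apply i).comp continuous_fst)).mul
        (((continuous_apply j).comp (PiLp.continuous_ofLp 2 _)).comp continuous_snd)
  exact ((EuclideanSpace.equiv (Fin k) ℝ).symm.continuous).comp h1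

/-- verification (suboptimality) inequality.  If `B` is `C¹` and solves
the HJB equation `H(x, ∇B(x)) = 0` for all `x`, then along any trajectory of
`ẋ = f(x) + g(x)u` on `[0,T]` driven by a continuous control `u`,
`B(x(0)) ≤ ∫₀ᵀ [ε(x) + ⟨u, Q(x)u⟩] dt + B(x(T))`. -/
theorem verification_inequality {n m : ℕ} (hn : 0 < n) (hm : 0 < m)
    (f : EuclideanSpace ℝ (Fin n) → EuclideanSpace ℝ (Fin n)) (hf : Continuous f)
    (g : EuclideanSpace ℝ (Fin n) → Matrix (Fin n) (Fin m) ℝ) (hg : Continuous g)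
    (ε : EuclideanSpace ℝ (Fin n) → ℝ) (hε : Continuous ε)
    (Q : EuclideanSpace ℝ (Fin n) → Matrix (Fin m) (Fin m) ℝ) (hQc : Continuous Q)
    (hQ : ∀ x, (Q x).PosDef)
    (B : EuclideanSpace ℝ (Fin n) → ℝ) (hB : ContDiff ℝ 1 B)
    (hHJB : ∀ x, Ham f g ε Q x (∇ B x) = 0)
    (T : ℝ) (hT : 0 < T)
    (u : ℝ → EuclideanSpace ℝ (Fin m)) (hu : ContinuousOn u (Set.Icc 0 T))
    (x : ℝ → EuclideanSpace ℝ (Fin n))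
    (hx : ∀ t ∈ Set.Icc (0 : ℝ) T,
      HasDerivWithinAt x (f (x t) + mulv (g (x t)) (u t)) (Set.Icc 0 T) t) :
    B (x 0) ≤ (∫ t in (0 : ℝ)..T, (ε (x t) + ⟪u t, mulv (Q (x t)) (u t)⟫)) + B (x T) := by
  set d : ℝ → EuclideanSpace ℝ (Fin n) := fun t => f (x t) + mulv (g (x t)) (u t) with hd
  set φ' : ℝ → ℝ := fun t => ⟪∇ B (x t), d t⟫ with hφ'
  set c : ℝ → ℝ := fun t => ε (x t) + ⟪u t, mulv (Q (x t)) (u t)⟫ with hcdef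
  -- differentiability of B
  have hBdiff : ∀ y, DifferentiableAt ℝ B y := fun y => hB.differentiable one_ne_zero y
  -- continuity facts
  have hxc : ContinuousOn x (Set.Icc 0 T) := fun t ht => (hx t ht).continuousWithinAt
  have hgradc : Continuous (∇ B) := by
    have : (∇ B) = fun y => (InnerProductSpace.toDual ℝ _).symm (fderiv ℝ B y) := rfl
    rw [this]
    exact (InnerProductSpace.toDual ℝ _).symm.continuous.comp (hB.continuous_fderiv one_ne_zero)
  have hdc : ContinuousOn d (Set.Icc 0 T) := by
    apply ((hf.comp_continuousOn hxc)).add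
    exact continuous_mulv.comp_continuousOn (((hg.comp_continuousOn hxc)).prodMk hu)
  have hφ'c : ContinuousOn φ' (Set.Icc 0 T) :=
    ContinuousOn.inner (hgradc.comp_continuousOn hxc) hdc
  have hcc : ContinuousOn c (Set.Icc 0 T) := by
    apply (hε.comp_continuousOn hxc).add
    exact ContinuousOn.inner hu
      (continuous_mulv.comp_continuousOn (((hQc.comp_continuousOn hxc)).prodMk hu))
  have hφ'int : IntervalIntegrable φ' MeasureTheory.volume 0 T := by
    apply ContinuousOn.intervalIntegrable; rwa [Set.uIcc_of_le hT.le]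
  have hcint : IntervalIntegrable c MeasureTheory.volume 0 T := by
    apply ContinuousOn.intervalIntegrable; rwa [Set.uIcc_of_le hT.le]
  -- derivative of B ∘ x
  have hφderiv : ∀ t ∈ Set.Icc (0:ℝ) T,
      HasDerivWithinAt (fun s => B (x s)) (φ' t) (Set.Icc 0 T) t := by
    intro t ht
    have hg' : HasGradientAt B (∇ B (x t)) (x t) := (hBdiff (x t)).hasGradientAt
    have := hg'.hasFDerivAt.comp_hasDerivWithinAt t (hx t ht)
    simpa [hφ', hd, InnerProductSpace.toDual_apply_apply, Function.comp_def] using this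
  -- FTC
  have hfund : ∫ t in (0:ℝ)..T, φ' t = B (x T) - B (x 0) := by
    apply intervalIntegral.integral_eq_sub_of_hasDeriv_right_of_le hT.le
      (hB.continuous.comp_continuousOn hxc) _ hφ'int
    intro t ht
    exact (hφderiv t (Set.Ioo_subset_Icc_self ht)).mono_of_mem_nhdsWithin
      (Icc_mem_nhdsGT_of_mem ⟨ht.1.le, ht.2⟩)
  -- pointwise nonnegativity
  have hpt : ∀ t ∈ Set.Icc (0:ℝ) T, 0 ≤ c t + φ' t := by
    intro t ht
    set X := x t
    set p := ∇ B X with hp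
    set v : EuclideanSpace ℝ (Fin m) := mulv (g X)ᵀ p with hv
    have hHJ := hHJB X
    rw [Ham] at hHJ
    have h1 : ⟪p, mulv (g X) (u t)⟫ = (v : Fin m → ℝ) ⬝ᵥ (u t) := by
      rw [inner_eq_dot, mulv_eq, Matrix.dotProduct_mulVec, hv, mulv_eq,
        Matrix.mulVec_transpose]
    have h2 := key_nonneg (Q X) (hQ X) (u t) v
    have h3 : ⟪v, mulv (Q X)⁻¹ v⟫ = (v : Fin m → ℝ) ⬝ᵥ (Q X)⁻¹ *ᵥ v := by
      rw [inner_eq_dot, mulv_eq]; rfl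
    have h4 : ⟪u t, mulv (Q X) (u t)⟫ = (u t : Fin m → ℝ) ⬝ᵥ (Q X) *ᵥ (u t) := by
      rw [inner_eq_dot, mulv_eq]
    have h5 : φ' t = ⟪p, f X⟫ + ⟪p, mulv (g X) (u t)⟫ := by
      rw [hφ']; exact inner_add_right _ _ _
    rw [hcdef]
    simp only [h5, h1, h4]
    rw [← hv] at hHJ
    rw [h3] at hHJ
    linarith
  have hnn : 0 ≤ ∫ t in (0:ℝ)..T, (c t + φ' t) :=
    intervalIntegral.integral_nonneg hT.le hpt
  rw [intervalIntegral.integral_add hcint hφ'int, hfund] at hnn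
  have : (∫ t in (0:ℝ)..T, c t) = ∫ t in (0:ℝ)..T, (ε (x t) + ⟪u t, mulv (Q (x t)) (u t)⟫) := rfl
  linarith [hnn, this ▸ hnn]
end

section
/- Dynamic programming equality along the optimal feedback: let B : ℝⁿ → ℝ be continuously differentiable and satisfy H(x, ∇B(x)) = 0 for all x ∈ ℝⁿ, and define u_B(x) = −(1/2)Q(x)⁻¹g(x)ᵀ∇B(x). Let T > 0 and let x : [0, T] → ℝⁿ be continuously differentiable with ẋ(t) = f(x(t)) + g(x(t))u_B(x(t)) for all t ∈ [0, T]. Then B(x(0)) = ∫₀ᵀ [ ε(x(t)) + ⟨u_B(x(t)), Q(x(t))u_B(x(t))⟩ ] dt + B(x(T)); that is, the closed-loop trajectory of the feedback u_B attains the cost bound with equality. -/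
open Matrix
open scoped RealInnerProductSpace

open scoped Gradient

section aux

lemma mulv_mulv {n m k : ℕ} (A : Matrix (Fin n) (Fin m) ℝ) (B : Matrix (Fin m) (Fin k) ℝ)
    (v : EuclideanSpace ℝ (Fin k)) : mulv A (mulv B v) = mulv (A * B) v := by
  ext i
  simp only [mulv, PiLp.toLp_apply, Matrix.mul_apply, Finset.sum_mul, Finset.mul_sum]
  rw [Finset.sum_comm]
  congr 1; ext j; congr 1; ext l; ring

lemma mulv_smul {n m : ℕ} (A : Matrix (Fin n) (Fin m) ℝ) (c : ℝ)
    (v : EuclideanSpace ℝ (Fin m)) : mulv A (c • v) = c • mulv A v := by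
  ext i
  simp only [mulv, PiLp.toLp_apply, PiLp.smul_apply, smul_eq_mul, Finset.mul_sum]
  congr 1; ext j; ring

lemma mulv_neg {n m : ℕ} (A : Matrix (Fin n) (Fin m) ℝ)
    (v : EuclideanSpace ℝ (Fin m)) : mulv A (-v) = -mulv A v := by
  ext i
  simp [mulv, ← Finset.sum_neg_distrib]

lemma mulv_one {n : ℕ} (v : EuclideanSpace ℝ (Fin n)) : mulv 1 v = v := by
  ext i
  simp [mulv, Matrix.one_apply]

lemma inner_mulv {n m : ℕ} (A : Matrix (Fin n) (Fin m) ℝ)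
    (p : EuclideanSpace ℝ (Fin n)) (u : EuclideanSpace ℝ (Fin m)) :
    ⟪p, mulv A u⟫ = ⟪mulv Aᵀ p, u⟫ := by
  simp only [PiLp.inner_apply, RCLike.inner_apply, conj_trivial, mulv, PiLp.toLp_apply, Matrix.transpose_apply,
    Finset.mul_sum, Finset.sum_mul]
  rw [Finset.sum_comm]
  congr 1; ext j; congr 1; ext i; ring

lemma continuous_mulv_s8 {n m : ℕ} {α : Type*} [TopologicalSpace α]
    {A : α → Matrix (Fin n) (Fin m) ℝ} {v : α → EuclideanSpace ℝ (Fin m)}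
    (hA : Continuous A) (hv : Continuous v) :
    Continuous (fun a => mulv (A a) (v a)) := by
  apply (PiLp.continuous_toLp 2 _).comp
  apply continuous_pi
  intro i
  exact continuous_finset_sum _ fun j _ =>
    ((continuous_apply j).comp ((continuous_apply i).comp hA)).mul
      ((PiLp.continuous_apply 2 _ j).comp hv)

/-- Key pointwise identity. -/
lemma key_identity {n m : ℕ}
    (f : EuclideanSpace ℝ (Fin n) → EuclideanSpace ℝ (Fin n))
    (g : EuclideanSpace ℝ (Fin n) → Matrix (Fin n) (Fin m) ℝ)
    (ε : EuclideanSpace ℝ (Fin n) → ℝ)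
    (Q : EuclideanSpace ℝ (Fin n) → Matrix (Fin m) (Fin m) ℝ)
    (hQ : ∀ x, (Q x).PosDef)
    (B : EuclideanSpace ℝ (Fin n) → ℝ)
    (hHJB : ∀ x, Ham f g ε Q x (∇ B x) = 0)
    (uB : EuclideanSpace ℝ (Fin n) → EuclideanSpace ℝ (Fin m))
    (huB : ∀ x, uB x = ustar g Q x (∇ B x)) (y : EuclideanSpace ℝ (Fin n)) :
    ⟪∇ B y, f y + mulv (g y) (uB y)⟫ = -(ε y + ⟪uB y, mulv (Q y) (uB y)⟫) := by
  have hQinv : Q y * (Q y)⁻¹ = 1 := Matrix.mul_nonsing_inv _ (isUnit_iff_ne_zero.mpr (hQ y).det_pos.ne')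
  set p := ∇ B y with hp
  set v : EuclideanSpace ℝ (Fin m) := mulv (g y)ᵀ p with hv
  set w : EuclideanSpace ℝ (Fin m) := mulv (Q y)⁻¹ v with hw
  have hu : uB y = -((1 / 2 : ℝ) • w) := huB y
  have hQw : mulv (Q y) w = v := by
    rw [hw, mulv_mulv, hQinv, mulv_one]
  have h1 : ⟪p, mulv (g y) (uB y)⟫ = -(1 / 2 : ℝ) * ⟪w, v⟫ := by
    rw [hu, mulv_neg, mulv_smul, inner_neg_right, real_inner_smul_right, inner_mulv, ← hv,
      real_inner_comm]
    ring
  have h2 : ⟪uB y, mulv (Q y) (uB y)⟫ = (1 / 4 : ℝ) * ⟪w, v⟫ := by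
    rw [hu, mulv_neg, mulv_smul, hQw, inner_neg_neg, real_inner_smul_left, real_inner_smul_right]
    ring
  have h3 : ⟪v, w⟫ = ⟪w, v⟫ := real_inner_comm _ _
  have hH := hHJB y
  simp only [Ham, ← hp, ← hv, ← hw] at hH
  rw [h3] at hH
  have hpf : ⟪p, f y⟫ = -(ε y) + (1 / 4 : ℝ) * ⟪w, v⟫ := by linarith
  rw [inner_add_right, hpf, h1, h2]
  ring

end aux

/-- dynamic programming equality along the optimal feedback.  If `B` is
`C¹` and solves the HJB equation, then along any closed-loop trajectory of the
feedback `u_B(x) = −(1/2)Q(x)⁻¹g(x)ᵀ∇B(x)` on `[0,T]`,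
`B(x(0)) = ∫₀ᵀ [ε(x) + ⟨u_B(x), Q(x)u_B(x)⟩] dt + B(x(T))`. -/
theorem dynamic_programming_equality {n m : ℕ} (hn : 0 < n) (hm : 0 < m)
    (f : EuclideanSpace ℝ (Fin n) → EuclideanSpace ℝ (Fin n)) (hf : Continuous f)
    (g : EuclideanSpace ℝ (Fin n) → Matrix (Fin n) (Fin m) ℝ) (hg : Continuous g)
    (ε : EuclideanSpace ℝ (Fin n) → ℝ) (hε : Continuous ε)
    (Q : EuclideanSpace ℝ (Fin n) → Matrix (Fin m) (Fin m) ℝ) (hQc : Continuous Q)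
    (hQ : ∀ x, (Q x).PosDef)
    (B : EuclideanSpace ℝ (Fin n) → ℝ) (hB : ContDiff ℝ 1 B)
    (hHJB : ∀ x, Ham f g ε Q x (∇ B x) = 0)
    (uB : EuclideanSpace ℝ (Fin n) → EuclideanSpace ℝ (Fin m))
    (huB : ∀ x, uB x = ustar g Q x (∇ B x))
    (T : ℝ) (hT : 0 < T)
    (x : ℝ → EuclideanSpace ℝ (Fin n))
    (hx : ∀ t ∈ Set.Icc (0 : ℝ) T,
      HasDerivWithinAt x (f (x t) + mulv (g (x t)) (uB (x t))) (Set.Icc 0 T) t) :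
    B (x 0) =
      (∫ t in (0 : ℝ)..T, (ε (x t) + ⟪uB (x t), mulv (Q (x t)) (uB (x t))⟫)) + B (x T) := by
  -- continuity of various pieces
  have hgrad : Continuous (∇ B) := by
    have := hB.continuous_fderiv one_ne_zero
    exact (InnerProductSpace.toDual ℝ (EuclideanSpace ℝ (Fin n))).symm.continuous.comp this
  have hQinvc : Continuous (fun y => (Q y)⁻¹) := by
    simp only [Matrix.inv_def, Ring.inverse_eq_inv']
    exact (hQc.matrix_det.inv₀ fun y => (hQ y).det_pos.ne').smul hQc.matrix_adjugate
  have huBc : Continuous uB := by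
    have : Continuous (fun y => ustar g Q y (∇ B y)) := by
      unfold ustar
      exact (Continuous.const_smul
        (continuous_mulv_s8 hQinvc (continuous_mulv_s8 (hg.matrix_transpose) hgrad))
        (1 / 2 : ℝ)).neg
    simpa [funext huB] using this
  have hxc : ContinuousOn x (Set.Icc 0 T) := fun t ht => (hx t ht).continuousWithinAt
  -- the integrand, continuous on [0,T]
  set φ : ℝ → ℝ := fun t => ε (x t) + ⟪uB (x t), mulv (Q (x t)) (uB (x t))⟫ with hφ
  have hφc : ContinuousOn φ (Set.Icc 0 T) := by
    apply ContinuousOn.add (hε.comp_continuousOn hxc)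
    exact (Continuous.inner huBc (continuous_mulv_s8 hQc huBc)).comp_continuousOn hxc
  -- FTC
  have key : ∀ t ∈ Set.Icc (0:ℝ) T,
      HasDerivWithinAt (fun s => B (x s)) (-(φ t)) (Set.Icc 0 T) t := by
    intro t ht
    have hBd : HasFDerivAt B (fderiv ℝ B (x t)) (x t) :=
      (hB.differentiable one_ne_zero (x t)).hasFDerivAt
    have := hBd.comp_hasDerivWithinAt t (hx t ht)
    have heq : fderiv ℝ B (x t) (f (x t) + mulv (g (x t)) (uB (x t))) = -(φ t) := by
      have : fderiv ℝ B (x t) (f (x t) + mulv (g (x t)) (uB (x t)))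
          = ⟪∇ B (x t), f (x t) + mulv (g (x t)) (uB (x t))⟫ := by
        rw [gradient, InnerProductSpace.toDual_symm_apply]
      rw [this, key_identity f g ε Q hQ B hHJB uB huB (x t)]
    rw [← heq]
    exact this
  have hint : IntervalIntegrable φ MeasureTheory.volume 0 T :=
    (hφc.mono (by rw [Set.uIcc_of_le hT.le])).intervalIntegrable
  have hFTC := intervalIntegral.integral_eq_sub_of_hasDeriv_right_of_le hT.le
    (fun t ht => (key t ht).continuousWithinAt)
    (fun t ht => (key t (Set.mem_Icc_of_Ioo ht)).mono_of_mem_nhdsWithin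
      (Icc_mem_nhdsGT_of_mem ⟨ht.1.le, ht.2⟩)) hint.neg
  rw [intervalIntegral.integral_neg] at hFTC
  have : -(∫ t in (0:ℝ)..T, φ t) = B (x T) - B (x 0) := hFTC
  simp only [hφ] at this ⊢
  linarith
end

section
/- Stabilization by the HJB feedback: let B : ℝⁿ → ℝ be continuously differentiable with B(0) = 0, B(x) > 0 for x ≠ 0, and B coercive (B(x) → ∞ as ‖x‖ → ∞); let ε : ℝⁿ → ℝ be continuous with ε(0) = 0 and ε(x) > 0 for x ≠ 0; suppose B satisfies the Hamilton–Jacobi–Bellman equation H(x, ∇B(x)) = 0 for all x ∈ ℝⁿ, and define the feedback u_B(x) = −(1/2)Q(x)⁻¹g(x)ᵀ∇B(x). Then every continuously differentiable global solution x : [0, ∞) → ℝⁿ of the closed-loop system ẋ(t) = f(x(t)) + g(x(t))u_B(x(t)) satisfies x(t) → 0 as t → ∞. -/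
open Matrix
open scoped RealInnerProductSpace

open scoped Gradient

lemma mulv_inner {n m : ℕ} (A : Matrix (Fin n) (Fin m) ℝ)
    (v : EuclideanSpace ℝ (Fin n)) (u : EuclideanSpace ℝ (Fin m)) :
    ⟪v, mulv A u⟫ = ⟪mulv Aᵀ v, u⟫ := by
  simp only [mulv, PiLp.inner_apply, RCLike.inner_apply, conj_trivial, transpose_apply,
    Finset.mul_sum, Finset.sum_mul]
  rw [Finset.sum_comm]
  exact Finset.sum_congr rfl fun j _ => Finset.sum_congr rfl fun i _ => by ring

lemma inner_mulv_nonneg {m : ℕ} {M : Matrix (Fin m) (Fin m) ℝ} (hM : M.PosSemidef)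
    (w : EuclideanSpace ℝ (Fin m)) : 0 ≤ ⟪w, mulv M w⟫ := by
  have h := hM.re_dotProduct_nonneg w
  simp [dotProduct, mulv, PiLp.inner_apply, RCLike.inner_apply, mulVec, star] at h ⊢
  simpa [mul_comm] using h

lemma comparison_lem {h : ℝ → ℝ} {d : ℝ → ℝ} {C a b : ℝ} (ha : 0 ≤ a) (hab : a ≤ b)
    (hd : ∀ t ∈ Set.Ici (0:ℝ), HasDerivWithinAt h (d t) (Set.Ici 0) t)
    (hC : ∀ t, a ≤ t → t ≤ b → d t ≤ C) : h b ≤ h a + C * (b - a) := by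
  have hsub : Set.Icc a b ⊆ Set.Ici (0:ℝ) := fun t ht => ha.trans ht.1
  have cont : ContinuousOn h (Set.Icc a b) := fun t ht =>
    ((hd t (hsub ht)).continuousWithinAt).mono hsub
  have hB : ∀ t : ℝ, HasDerivAt (fun s => h a + C * (s - a)) C t := by
    intro t
    simpa using (((hasDerivAt_id t).sub_const a).const_mul C).const_add (h a)
  have := image_le_of_deriv_right_le_deriv_boundary (f := h) (f' := d) (a := a) (b := b)
    cont
    (fun t ht => (hd t (hsub ⟨ht.1, ht.2.le⟩)).mono (Set.Ici_subset_Ici.2 (ha.trans ht.1)))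
    (by simp)
    (fun t _ => ((hB t).continuousAt).continuousWithinAt)
    (fun t ht => (hB t).hasDerivWithinAt)
    (fun t ht => hC t ht.1 ht.2.le)
  simpa using this ⟨hab, le_rfl⟩

/-- stabilization by the HJB feedback.  If `B` is a `C¹`, positive
definite, coercive solution of the HJB equation `H(x, ∇B(x)) = 0`, then every
global `C¹` solution of the closed-loop system
`ẋ = f(x) + g(x)u_B(x)`, `u_B(x) = −(1/2)Q(x)⁻¹g(x)ᵀ∇B(x)`, tends to `0`. -/
theorem stabilization_by_HJB_feedback {n m : ℕ} (hn : 0 < n) (hm : 0 < m)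
    (f : EuclideanSpace ℝ (Fin n) → EuclideanSpace ℝ (Fin n)) (hf : Continuous f)
    (g : EuclideanSpace ℝ (Fin n) → Matrix (Fin n) (Fin m) ℝ) (hg : Continuous g)
    (ε : EuclideanSpace ℝ (Fin n) → ℝ) (hε : Continuous ε)
    (Q : EuclideanSpace ℝ (Fin n) → Matrix (Fin m) (Fin m) ℝ) (hQc : Continuous Q)
    (hQ : ∀ x, (Q x).PosDef)
    (B : EuclideanSpace ℝ (Fin n) → ℝ) (hB : ContDiff ℝ 1 B)
    (hB0 : B 0 = 0) (hBpos : ∀ y, y ≠ 0 → 0 < B y)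
    (hBcoercive : Filter.Tendsto B (Filter.cocompact (EuclideanSpace ℝ (Fin n))) Filter.atTop)
    (hε0 : ε 0 = 0) (hεpos : ∀ y, y ≠ 0 → 0 < ε y)
    (hHJB : ∀ x, Ham f g ε Q x (∇ B x) = 0)
    (uB : EuclideanSpace ℝ (Fin n) → EuclideanSpace ℝ (Fin m))
    (huB : ∀ x, uB x = ustar g Q x (∇ B x))
    (x : ℝ → EuclideanSpace ℝ (Fin n))
    (hx : ∀ t ∈ Set.Ici (0 : ℝ),
      HasDerivWithinAt x (f (x t) + mulv (g (x t)) (uB (x t))) (Set.Ici 0) t) :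
    Filter.Tendsto x Filter.atTop (nhds 0) := by
  classical
  have hBdiff : Differentiable ℝ B := hB.differentiable one_ne_zero
  have hBnn : ∀ y, 0 ≤ B y := by
    intro y
    by_cases hy : y = 0
    · simp [hy, hB0]
    · exact (hBpos y hy).le
  have hεnn : ∀ y, 0 ≤ ε y := by
    intro y
    by_cases hy : y = 0
    · simp [hy, hε0]
    · exact (hεpos y hy).le
  have hgrad : ∀ y (v : EuclideanSpace ℝ (Fin n)), (fderiv ℝ B y) v = ⟪∇ B y, v⟫ := by
    intro y v
    have h1 : HasGradientAt B (∇ B y) y := (hBdiff y).hasGradientAt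
    rw [hasGradientAt_iff_hasFDerivAt] at h1
    rw [h1.fderiv, InnerProductSpace.toDual_apply_apply]
  -- the key pointwise bound on the closed-loop derivative
  have key : ∀ y, ⟪∇ B y, f y + mulv (g y) (uB y)⟫ ≤ -ε y := by
    intro y
    have hq : (0:ℝ) ≤ ⟪mulv (g y)ᵀ (∇ B y), mulv (Q y)⁻¹ (mulv (g y)ᵀ (∇ B y))⟫ :=
      inner_mulv_nonneg ((hQ y).inv.posSemidef) _
    have hH := hHJB y
    unfold Ham at hH
    rw [inner_add_right, mulv_inner (g y) (∇ B y) (uB y), huB y]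
    unfold ustar
    rw [inner_neg_right, real_inner_smul_right]
    linarith [hq, hH]
  -- derivative of B along the trajectory
  set D : ℝ → ℝ := fun t => ⟪∇ B (x t), f (x t) + mulv (g (x t)) (uB (x t))⟫ with hD
  have hcomp : ∀ t ∈ Set.Ici (0:ℝ),
      HasDerivWithinAt (fun s => B (x s)) (D t) (Set.Ici 0) t := by
    intro t ht
    have h1 : HasFDerivAt B (fderiv ℝ B (x t)) (x t) := (hBdiff _).hasFDerivAt
    have h2 := h1.comp_hasDerivWithinAt t (hx t ht)
    rw [hgrad] at h2
    exact h2
  have hDle : ∀ t, D t ≤ -ε (x t) := fun t => key (x t)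
  -- B ∘ x is antitone on [0, ∞)
  have hmono : ∀ a b : ℝ, 0 ≤ a → a ≤ b → B (x b) ≤ B (x a) := by
    intro a b ha hab
    have := comparison_lem (C := 0) ha hab hcomp
      (fun t _ _ => (hDle t).trans (neg_nonpos.2 (hεnn (x t))))
    simpa using this
  -- compact sublevel sets
  have hsub : ∀ M : ℝ, IsCompact {y : EuclideanSpace ℝ (Fin n) | B y ≤ M} := by
    intro M
    have hmem : B ⁻¹' Set.Ioi M ∈ Filter.cocompact (EuclideanSpace ℝ (Fin n)) :=
      hBcoercive (Filter.Ioi_mem_atTop M)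
    obtain ⟨K, hK, hKsub⟩ := Filter.hasBasis_cocompact.mem_iff.1 hmem
    refine hK.of_isClosed_subset (isClosed_le hB.continuous continuous_const) ?_
    intro y hy
    by_contra hyK
    exact absurd (hKsub hyK) (by simpa using hy)
  -- B (x t) becomes eventually small
  have hsmall : ∀ β : ℝ, 0 < β → ∀ᶠ t in Filter.atTop, B (x t) < β := by
    intro β hβ
    by_contra hcon
    have hall : ∀ t : ℝ, 0 ≤ t → β ≤ B (x t) := by
      by_contra h'
      push_neg at h'
      obtain ⟨t₀, ht₀, hlt⟩ := h'
      exact hcon <| by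
        filter_upwards [Filter.eventually_ge_atTop t₀] with t ht
        exact lt_of_le_of_lt (hmono t₀ t ht₀ ht) hlt
    set S : Set (EuclideanSpace ℝ (Fin n)) := {y | β ≤ B y ∧ B y ≤ B (x 0)} with hSdef
    have hSclosed : IsClosed S :=
      (isClosed_le continuous_const hB.continuous).inter
        (isClosed_le hB.continuous continuous_const)
    have hScomp : IsCompact S :=
      (hsub (B (x 0))).of_isClosed_subset hSclosed (fun y hy => hy.2)
    have hSne : x 0 ∈ S := ⟨hall 0 le_rfl, le_rfl⟩
    obtain ⟨y₀, hy₀S, hy₀min⟩ := hScomp.exists_isMinOn ⟨_, hSne⟩ hε.continuousOn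
    have hy₀ne : y₀ ≠ 0 := by
      intro h
      have h1 : β ≤ B y₀ := hy₀S.1
      rw [h, hB0] at h1
      exact absurd h1 (not_le.2 hβ)
    have hα : 0 < ε y₀ := hεpos y₀ hy₀ne
    set α := ε y₀ with hαdef
    have hxS : ∀ t : ℝ, 0 ≤ t → x t ∈ S := fun t ht => ⟨hall t ht, hmono 0 t le_rfl ht⟩
    set T : ℝ := B (x 0) / α + 1 with hTdef
    have hT0 : 0 ≤ T := by
      have : 0 ≤ B (x 0) / α := div_nonneg (hBnn _) hα.le
      rw [hTdef]; linarith
    have := comparison_lem (C := -α) le_rfl hT0 hcomp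
      (fun t ht _ => (hDle t).trans (neg_le_neg (hy₀min (hxS t ht))))
    have hBT : 0 ≤ B (x T) := hBnn _
    rw [hTdef] at this
    have : B (x T) ≤ B (x 0) + -α * (B (x 0) / α + 1 - 0) := this
    have hfield : α * (B (x 0) / α) = B (x 0) := by field_simp
    nlinarith
  -- conclude convergence to 0
  rw [NormedAddCommGroup.tendsto_nhds_zero]
  intro δ hδ
  set K : Set (EuclideanSpace ℝ (Fin n)) := {y | B y ≤ B (x 0)} with hKdef
  set S2 : Set (EuclideanSpace ℝ (Fin n)) := K ∩ {y | δ ≤ ‖y‖} with hS2def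
  have hS2closed : IsClosed S2 :=
    (isClosed_le hB.continuous continuous_const).inter
      (isClosed_le continuous_const continuous_norm)
  have hS2comp : IsCompact S2 :=
    (hsub (B (x 0))).of_isClosed_subset hS2closed Set.inter_subset_left
  by_cases hS2ne : S2.Nonempty
  · obtain ⟨y₀, hy₀S, hy₀min⟩ := hS2comp.exists_isMinOn hS2ne hB.continuous.continuousOn
    have hy₀ne : y₀ ≠ 0 := by
      intro h
      rw [h] at hy₀S
      have := hy₀S.2
      simp only [Set.mem_setOf_eq, norm_zero] at this
      exact absurd this (not_le.2 hδ)
    have hβ : 0 < B y₀ := hBpos y₀ hy₀ne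
    filter_upwards [hsmall (B y₀) hβ, Filter.eventually_ge_atTop (0:ℝ)] with t h1 h2
    by_contra hge
    push_neg at hge
    have hmem : x t ∈ S2 := ⟨hmono 0 t le_rfl h2, hge⟩
    exact absurd (hy₀min hmem) (not_le.2 h1)
  · filter_upwards [Filter.eventually_ge_atTop (0:ℝ)] with t ht
    by_contra hge
    push_neg at hge
    exact hS2ne ⟨x t, ⟨hmono 0 t le_rfl ht, hge⟩⟩
end
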